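/- arXiv:1210.5685 — 2 statements merged into one kernel-verified Lean document; each statement's English description precedes it below -/
import Mathlib

section
/- For every real number δ, ∫_{−π/2}^{π/2} (1 + δ·ξ(θ)) dθ = π·(1 − δ). -/
open Real Set Filter Topology

/-- The test function ξ(θ) = (cos²θ + 2θ·sinθ·cosθ + θ² − π²/4)/cos²θ. -/
noncomputable def xi (θ : ℝ) : ℝ :=
  (Real.cos θ ^ 2 + 2 * θ * Real.sin θ * Real.cos θ + θ ^ 2 - Real.pi ^ 2 / 4) /
    Real.cos θ ^ 2

lemma L1 : Tendsto (fun u : ℝ => u / Real.sin u) (𝓝[≠] 0) (𝓝 1) := by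
  have h := (Real.hasDerivAt_sin 0)
  rw [hasDerivAt_iff_tendsto_slope] at h
  have h2 : Tendsto (fun u : ℝ => Real.sin u / u) (𝓝[≠] 0) (𝓝 1) := by
    have : slope Real.sin 0 = fun u : ℝ => Real.sin u / u := by
      funext u; simp [slope_def_field]
    rw [this] at h; simpa using h
  have := h2.inv₀ one_ne_zero
  simpa [inv_div] using this

lemma sin_sub_bound {x : ℝ} (h : |x| ≤ 1) : |Real.sin x - x| ≤ |x| ^ 3 := by
  have key : ∀ y : ℝ, 0 < y → y ≤ 1 → |Real.sin y - y| ≤ |y| ^ 3 := by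
    intro y hy hy1
    have h1 := Real.sin_lt hy
    have h2 := Real.sin_gt_sub_cube hy
    rw [abs_sub_comm, abs_of_nonneg (by linarith), abs_of_pos hy]
    nlinarith [pow_pos hy 3]
  rcases lt_trichotomy x 0 with hx | hx | hx
  · have := key (-x) (by linarith) (by rw [abs_of_neg hx] at h; linarith)
    rw [Real.sin_neg] at this
    have e : -Real.sin x - -x = -(Real.sin x - x) := by ring
    rw [e, abs_neg, abs_neg] at this
    exact this
  · simp [hx]
  · exact key x hx (by rwa [abs_of_pos hx] at h)

lemma L2 : Tendsto (fun u : ℝ => (Real.sin (2*u) - 2*u) / Real.sin u ^ 2) (𝓝[≠] 0) (𝓝 0) := by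
  have hA : Tendsto (fun u : ℝ => (Real.sin (2*u) - 2*u) / u ^ 2) (𝓝[≠] 0) (𝓝 0) := by
    apply squeeze_zero_norm' (a := fun u : ℝ => 8 * |u|)
    · filter_upwards [nhdsWithin_le_nhds (Icc_mem_nhds (by norm_num : (-(1:ℝ)/2) < 0) (by norm_num : (0:ℝ) < 1/2)),
        self_mem_nhdsWithin] with u hu hu'
      have habs : |2*u| ≤ 1 := by
        have : |u| ≤ 1/2 := abs_le.mpr ⟨by linarith [hu.1], hu.2⟩
        rw [abs_mul, abs_two]; linarith
      have hb := sin_sub_bound habs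
      have hu0 : u ≠ 0 := hu'
      rw [Real.norm_eq_abs, abs_div, abs_pow, sq_abs,
        div_le_iff₀ (by positivity : (0:ℝ) < u^2)]
      calc |Real.sin (2*u) - 2*u| ≤ |2*u|^3 := hb
        _ = 8 * |u| * u^2 := by
            rw [abs_mul, abs_two, mul_pow, ← sq_abs u]; ring
    · have : Tendsto (fun u : ℝ => 8 * |u|) (𝓝 0) (𝓝 (8 * |(0:ℝ)|)) := by
        exact (continuous_const.mul continuous_abs).tendsto 0
      simpa using this.mono_left nhdsWithin_le_nhds
  have hB : Tendsto (fun u : ℝ => (u / Real.sin u)^2) (𝓝[≠] 0) (𝓝 1) := by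
    simpa using L1.pow 2
  have := hA.mul hB
  rw [zero_mul] at this
  apply this.congr'
  filter_upwards [self_mem_nhdsWithin] with u hu
  rcases eq_or_ne (Real.sin u) 0 with hs | hs
  · simp [hs, div_pow]
  · have hu0 : u ≠ 0 := hu
    field_simp

lemma xi_sub : ∀ u : ℝ, Real.sin u ≠ 0 →
    xi (Real.pi/2 - u) = 1 + (Real.pi/2 - u) * ((Real.sin (2*u) - 2*u) / Real.sin u ^ 2)
      - (u / Real.sin u)^2 := by
  intro u hs
  have hc : Real.cos (Real.pi/2 - u) = Real.sin u := Real.cos_pi_div_two_sub u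
  have hsn : Real.sin (Real.pi/2 - u) = Real.cos u := Real.sin_pi_div_two_sub u
  have h2 : Real.sin (2*u) = 2 * Real.sin u * Real.cos u := by
    rw [Real.sin_two_mul]
  rw [xi, hc, hsn, h2, div_pow]
  field_simp
  ring

lemma xi_pi_div_two : xi (Real.pi/2) = 0 := by
  simp [xi]

lemma xi_cont_right : ContinuousAt xi (Real.pi/2) := by
  have hmap : Tendsto (fun θ : ℝ => Real.pi/2 - θ) (𝓝[≠] (Real.pi/2)) (𝓝[≠] 0) := by
    apply tendsto_nhdsWithin_of_tendsto_nhds_of_eventually_within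
    · have : Tendsto (fun θ : ℝ => Real.pi/2 - θ) (𝓝 (Real.pi/2)) (𝓝 (Real.pi/2 - Real.pi/2)) :=
        (continuous_const.sub continuous_id).tendsto _
      simpa using this.mono_left nhdsWithin_le_nhds
    · filter_upwards [self_mem_nhdsWithin] with θ hθ
      simp only [mem_compl_iff, mem_singleton_iff] at *
      intro h; apply hθ; linarith [sub_eq_zero.mp h]
  have hE : Tendsto (fun u : ℝ => 1 + (Real.pi/2 - u) * ((Real.sin (2*u) - 2*u) / Real.sin u ^ 2)
      - (u / Real.sin u)^2) (𝓝[≠] 0) (𝓝 0) := by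
    have hc : Tendsto (fun u : ℝ => Real.pi/2 - u) (𝓝[≠] 0) (𝓝 (Real.pi/2)) := by
      have : Tendsto (fun u : ℝ => Real.pi/2 - u) (𝓝 0) (𝓝 (Real.pi/2 - 0)) :=
        (continuous_const.sub continuous_id).tendsto _
      simpa using this.mono_left nhdsWithin_le_nhds
    have h1 : Tendsto (fun u : ℝ => 1 + (Real.pi/2 - u) * ((Real.sin (2*u) - 2*u) / Real.sin u ^ 2))
        (𝓝[≠] 0) (𝓝 (1 + Real.pi/2 * 0)) :=
      (tendsto_const_nhds : Tendsto (fun _ : ℝ => (1:ℝ)) (𝓝[≠] 0) (𝓝 1)).add (hc.mul L2)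
    have h := h1.sub (L1.pow 2)
    convert h using 1
    norm_num
  have hxiu : Tendsto (fun u : ℝ => xi (Real.pi/2 - u)) (𝓝[≠] 0) (𝓝 0) := by
    apply hE.congr'
    have hmem : Ioo (-Real.pi) Real.pi ∈ 𝓝[≠] (0:ℝ) :=
      nhdsWithin_le_nhds (Ioo_mem_nhds (neg_neg_of_pos Real.pi_pos) Real.pi_pos)
    filter_upwards [hmem, self_mem_nhdsWithin] with u hu hu0
    have hs : Real.sin u ≠ 0 := by
      intro h
      exact hu0 ((Real.sin_eq_zero_iff_of_lt_of_lt hu.1 hu.2).mp h)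
    exact (xi_sub u hs).symm
  have hxip : Tendsto xi (𝓝[≠] (Real.pi/2)) (𝓝 0) := by
    have := hxiu.comp hmap
    apply this.congr
    intro θ
    simp [Function.comp]
  rw [ContinuousAt, xi_pi_div_two, ← nhdsNE_sup_pure]
  rw [tendsto_sup]
  exact ⟨hxip, by simpa [xi_pi_div_two] using (tendsto_pure_nhds xi (Real.pi/2))⟩

lemma xi_even (θ : ℝ) : xi (-θ) = xi θ := by
  simp only [xi, Real.sin_neg, Real.cos_neg]
  ring_nf

lemma xi_cont_left : ContinuousAt xi (-(Real.pi/2)) := by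
  have h : ContinuousAt (fun θ : ℝ => xi (-θ)) (-(Real.pi/2)) := by
    have h0 : ContinuousAt xi (-(-(Real.pi/2))) := by rw [neg_neg]; exact xi_cont_right
    exact ContinuousAt.comp (g := xi) (f := fun θ : ℝ => -θ) h0 continuous_neg.continuousAt
  exact h.congr (Filter.Eventually.of_forall fun θ => xi_even θ)

lemma xi_contOn : ContinuousOn xi (Icc (-(Real.pi/2)) (Real.pi/2)) := by
  intro θ hθ
  rcases eq_or_ne θ (Real.pi/2) with rfl | h1
  · exact xi_cont_right.continuousWithinAt
  rcases eq_or_ne θ (-(Real.pi/2)) with rfl | h2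
  · exact xi_cont_left.continuousWithinAt
  have hθ' : θ ∈ Ioo (-(Real.pi/2)) (Real.pi/2) :=
    ⟨lt_of_le_of_ne hθ.1 (Ne.symm h2), lt_of_le_of_ne hθ.2 h1⟩
  have hc : Real.cos θ ≠ 0 := (Real.cos_pos_of_mem_Ioo hθ').ne'
  have hnum : ContinuousAt (fun θ : ℝ =>
      Real.cos θ ^ 2 + 2*θ*Real.sin θ*Real.cos θ + θ^2 - Real.pi^2/4) θ := by fun_prop
  have hden : ContinuousAt (fun θ : ℝ => Real.cos θ ^ 2) θ := by fun_prop
  exact (hnum.div hden (pow_ne_zero 2 hc)).continuousWithinAt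

lemma tan_id (θ : ℝ) : (θ^2 - Real.pi^2/4) * Real.tan θ =
    -((Real.pi - (Real.pi/2 - θ)) * Real.cos (Real.pi/2 - θ)) *
      ((Real.pi/2 - θ) / Real.sin (Real.pi/2 - θ)) := by
  rw [Real.tan_eq_sin_div_cos, Real.cos_pi_div_two_sub, Real.sin_pi_div_two_sub,
    div_eq_mul_inv, div_eq_mul_inv]
  ring

lemma L4 : Tendsto (fun θ : ℝ => (θ^2 - Real.pi^2/4) * Real.tan θ)
    (𝓝[<] (Real.pi/2)) (𝓝 (-Real.pi)) := by
  have hmap : Tendsto (fun θ : ℝ => Real.pi/2 - θ) (𝓝[<] (Real.pi/2)) (𝓝[>] 0) := by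
    apply tendsto_nhdsWithin_of_tendsto_nhds_of_eventually_within
    · have : Tendsto (fun θ : ℝ => Real.pi/2 - θ) (𝓝 (Real.pi/2)) (𝓝 (Real.pi/2 - Real.pi/2)) :=
        (continuous_const.sub continuous_id).tendsto _
      simpa using this.mono_left nhdsWithin_le_nhds
    · filter_upwards [self_mem_nhdsWithin] with θ hθ
      simp only [mem_Iio] at hθ
      simp only [mem_Ioi]
      linarith
  have hg : Tendsto (fun u : ℝ => -((Real.pi - u) * Real.cos u) * (u / Real.sin u))
      (𝓝[>] 0) (𝓝 (-Real.pi)) := by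
    have h1 : Tendsto (fun u : ℝ => -((Real.pi - u) * Real.cos u)) (𝓝[>] 0)
        (𝓝 (-((Real.pi - 0) * Real.cos 0))) :=
      (((continuous_const.sub continuous_id).mul Real.continuous_cos).neg.tendsto 0).mono_left
        nhdsWithin_le_nhds
    have h2 : Tendsto (fun u : ℝ => u / Real.sin u) (𝓝[>] 0) (𝓝 1) :=
      L1.mono_left (nhdsWithin_mono 0 fun x hx => (ne_of_gt hx : x ≠ 0))
    have := h1.mul h2
    norm_num at this
    simpa using this
  have := hg.comp hmap
  apply this.congr
  intro θ
  simp only [Function.comp]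
  exact (tan_id θ).symm

lemma L4' : Tendsto (fun θ : ℝ => (θ^2 - Real.pi^2/4) * Real.tan θ)
    (𝓝[>] (-(Real.pi/2))) (𝓝 Real.pi) := by
  have hmap : Tendsto (fun θ : ℝ => -θ) (𝓝[>] (-(Real.pi/2))) (𝓝[<] (Real.pi/2)) := by
    apply tendsto_nhdsWithin_of_tendsto_nhds_of_eventually_within
    · have : Tendsto (fun θ : ℝ => -θ) (𝓝 (-(Real.pi/2))) (𝓝 (-(-(Real.pi/2)))) :=
        continuous_neg.tendsto _
      simpa using this.mono_left nhdsWithin_le_nhds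
    · filter_upwards [self_mem_nhdsWithin] with θ hθ
      simp only [mem_Ioi] at hθ
      simp only [mem_Iio]
      linarith
  have := (L4.comp hmap).neg
  rw [neg_neg] at this
  apply this.congr
  intro θ
  simp only [Function.comp, Real.tan_neg]
  ring

theorem z_integral_full (δ : ℝ) :
    ∫ θ in (-(Real.pi / 2))..(Real.pi / 2), (1 + δ * xi θ) = Real.pi * (1 - δ) := by
  set a : ℝ := -(Real.pi/2) with ha
  set b : ℝ := Real.pi/2 with hb
  have hab : a < b := by
    rw [ha, hb]; have := Real.pi_pos; linarith
  set F₀ : ℝ → ℝ := fun θ => (1+δ)*θ + δ*((θ^2 - Real.pi^2/4) * Real.tan θ) with hF₀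
  set G : ℝ → ℝ := fun θ => if θ ∈ Ioo a b then F₀ θ else (1-δ)*θ with hG
  have hGIoo : ∀ x ∈ Ioo a b, G x = F₀ x := fun x hx => if_pos hx
  have hGa : G a = (1-δ)*a := by simp [hG, Ioo, lt_irrefl]
  have hGb : G b = (1-δ)*b := by simp [hG, Ioo, lt_irrefl]
  -- derivative on Ioo
  have hderiv : ∀ θ ∈ Ioo a b, HasDerivWithinAt G (1 + δ * xi θ) (Ioi θ) θ := by
    intro θ hθ
    have hc : Real.cos θ ≠ 0 := (Real.cos_pos_of_mem_Ioo hθ).ne'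
    have hF : HasDerivAt F₀ ((1+δ)*1 + δ*(((2:ℕ)*θ^1) * Real.tan θ
        + (θ^2 - Real.pi^2/4) * (1 / Real.cos θ ^ 2))) θ := by
      exact ((hasDerivAt_id θ).const_mul (1+δ)).add
        ((((hasDerivAt_pow 2 θ).sub_const (Real.pi^2/4)).mul (Real.hasDerivAt_tan hc)).const_mul δ)
    have hval : (1+δ)*1 + δ*(((2:ℕ)*θ^1) * Real.tan θ
        + (θ^2 - Real.pi^2/4) * (1 / Real.cos θ ^ 2)) = 1 + δ * xi θ := by
      simp only [xi, Real.tan_eq_sin_div_cos]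
      push_cast
      field_simp
      ring
    rw [hval] at hF
    have hGF : G =ᶠ[𝓝 θ] F₀ := by
      filter_upwards [isOpen_Ioo.mem_nhds hθ] with x hx
      exact hGIoo x hx
    exact (hF.congr_of_eventuallyEq hGF).hasDerivWithinAt
  -- continuity on Icc
  have hcont : ContinuousOn G (Icc a b) := by
    intro θ hθ
    rcases eq_or_ne θ b with rfl | h1
    · rw [← continuousWithinAt_diff_self]
      have hsub : Icc a b \ {b} ⊆ Iio b := fun x hx => lt_of_le_of_ne hx.1.2 hx.2
      have hlin : Tendsto (fun θ : ℝ => (1+δ)*θ) (𝓝[<] b) (𝓝 ((1+δ)*b)) :=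
        ((continuous_const.mul continuous_id).tendsto b).mono_left nhdsWithin_le_nhds
      have hlim : Tendsto F₀ (𝓝[<] b) (𝓝 ((1+δ)*b + δ*(-Real.pi))) :=
        hlin.add (L4.const_mul δ)
      have heq : G =ᶠ[𝓝[<] b] F₀ := by
        filter_upwards [self_mem_nhdsWithin,
          nhdsWithin_le_nhds (Ioi_mem_nhds hab)] with x hx hx'
        simp only [mem_Iio] at hx
        exact hGIoo x ⟨hx', hx⟩
      have hT : Tendsto G (𝓝[Icc a b \ {b}] b) (𝓝 ((1+δ)*b + δ*(-Real.pi))) :=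
        (hlim.congr' heq.symm).mono_left (nhdsWithin_mono b hsub)
      have : (1+δ)*b + δ*(-Real.pi) = G b := by rw [hGb, hb]; ring
      rw [this] at hT
      exact hT
    rcases eq_or_ne θ a with rfl | h2
    · rw [← continuousWithinAt_diff_self]
      have hsub : Icc a b \ {a} ⊆ Ioi a := fun x hx =>
        lt_of_le_of_ne hx.1.1 (Ne.symm hx.2)
      have hlin : Tendsto (fun θ : ℝ => (1+δ)*θ) (𝓝[>] a) (𝓝 ((1+δ)*a)) :=
        ((continuous_const.mul continuous_id).tendsto a).mono_left nhdsWithin_le_nhds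
      have hlim : Tendsto F₀ (𝓝[>] a) (𝓝 ((1+δ)*a + δ*Real.pi)) :=
        hlin.add (L4'.const_mul δ)
      have heq : G =ᶠ[𝓝[>] a] F₀ := by
        filter_upwards [self_mem_nhdsWithin,
          nhdsWithin_le_nhds (Iio_mem_nhds hab)] with x hx hx'
        simp only [mem_Ioi] at hx
        simp only [mem_Iio] at hx'
        exact hGIoo x ⟨hx, hx'⟩
      have hT : Tendsto G (𝓝[Icc a b \ {a}] a) (𝓝 ((1+δ)*a + δ*Real.pi)) :=
        (hlim.congr' heq.symm).mono_left (nhdsWithin_mono a hsub)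
      have : (1+δ)*a + δ*Real.pi = G a := by rw [hGa, ha]; ring
      rw [this] at hT
      exact hT
    · have hθ' : θ ∈ Ioo a b := ⟨lt_of_le_of_ne hθ.1 (Ne.symm h2), lt_of_le_of_ne hθ.2 h1⟩
      have hc : Real.cos θ ≠ 0 := (Real.cos_pos_of_mem_Ioo hθ').ne'
      have hFc : ContinuousAt F₀ θ := by
        apply ContinuousAt.add (by fun_prop)
        exact ContinuousAt.mul continuousAt_const
          (ContinuousAt.mul (by fun_prop) (Real.continuousAt_tan.mpr hc))
      have hGF : G =ᶠ[𝓝 θ] F₀ := by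
        filter_upwards [isOpen_Ioo.mem_nhds hθ'] with x hx
        exact hGIoo x hx
      exact (hFc.congr hGF.symm).continuousWithinAt
  -- integrability
  have hint : IntervalIntegrable (fun θ => 1 + δ * xi θ) MeasureTheory.volume a b := by
    apply ContinuousOn.intervalIntegrable
    rw [uIcc_of_le hab.le]
    exact continuousOn_const.add (continuousOn_const.mul xi_contOn)
  have := intervalIntegral.integral_eq_sub_of_hasDeriv_right_of_le hab.le hcont hderiv hint
  rw [this, hGa, hGb, ha, hb]
  ring
end

section
/- For every real number δ with 0 < δ ≤ 1/2, the inequality ∫₀^{π/2} (1 + δ·ξ(θ))^{−1/2} dθ ≥ (π/2)·(1 − δ)^{−1/2} holds. -/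
open Real Set Filter Topology

lemma tanDeriv {x : ℝ} (hx : x ∈ Ioo 0 (Real.pi/2)) :
    HasDerivAt (fun x => Real.tan x / x) ((1 / Real.cos x ^ 2 * x - Real.tan x) / x ^ 2) x := by
  have hc : 0 < Real.cos x := Real.cos_pos_of_mem_Ioo ⟨by linarith [hx.1, Real.pi_pos], hx.2⟩
  have := (Real.hasDerivAt_tan hc.ne').div (hasDerivAt_id x) hx.1.ne'
  refine this.congr_deriv ?_
  simp only [id, mul_one]

lemma tanDivMono : MonotoneOn (fun x => Real.tan x / x) (Ioo 0 (Real.pi/2)) := by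
  have hconv : Convex ℝ (Ioo (0:ℝ) (Real.pi/2)) := convex_Ioo _ _
  apply monotoneOn_of_deriv_nonneg hconv
  · apply ContinuousOn.div
    · apply Real.continuousOn_tan.mono
      intro x hx
      exact ne_of_gt (Real.cos_pos_of_mem_Ioo ⟨by linarith [hx.1, Real.pi_pos], hx.2⟩)
    · exact continuousOn_id
    · intro x hx; exact ne_of_gt hx.1
  · rw [interior_Ioo]
    intro x hx
    exact (tanDeriv hx).differentiableAt.differentiableWithinAt
  · rw [interior_Ioo]
    intro x hx
    have hc : 0 < Real.cos x := Real.cos_pos_of_mem_Ioo ⟨by linarith [hx.1, Real.pi_pos], hx.2⟩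
    rw [(tanDeriv hx).deriv]
    have hs : Real.sin x ≤ x := le_of_lt (Real.sin_lt hx.1)
    have hs0 : 0 ≤ Real.sin x := Real.sin_nonneg_of_nonneg_of_le_pi hx.1.le (by linarith [Real.pi_pos, hx.2])
    have hc1 : Real.cos x ≤ 1 := Real.cos_le_one x
    have key : Real.sin x * Real.cos x ≤ x := by nlinarith
    have h2 : 0 ≤ 1 / Real.cos x ^ 2 * x - Real.tan x := by
      rw [Real.tan_eq_sin_div_cos]
      have : 1 / Real.cos x ^ 2 * x - Real.sin x / Real.cos x = (x - Real.sin x * Real.cos x)/Real.cos x^2 := by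
        field_simp
      rw [this]
      have : 0 ≤ x - Real.sin x * Real.cos x := by linarith
      positivity
    exact div_nonneg h2 (by positivity)

noncomputable def Qf (x : ℝ) : ℝ := (5/2)*Real.cos x^2 + 2*x*Real.sin x*Real.cos x + x^2

lemma Qf_deriv (x : ℝ) : HasDerivAt Qf (Real.cos x * (4*x*Real.cos x - 3*Real.sin x)) x := by
  have h1 : HasDerivAt (fun x => (5/2)*Real.cos x^2) ((5/2)*(2*Real.cos x^(2-1)*(-Real.sin x))) x :=
    ((Real.hasDerivAt_cos x).pow 2).const_mul _
  have h2 : HasDerivAt (fun x => 2*x*Real.sin x*Real.cos x)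
      (((2*Real.sin x + 2*x*Real.cos x)*Real.cos x) + 2*x*Real.sin x*(-Real.sin x)) x := by
    refine ((((hasDerivAt_id x).const_mul 2).mul (Real.hasDerivAt_sin x)).mul (Real.hasDerivAt_cos x)).congr_deriv ?_
    simp only [id, mul_one, Pi.mul_apply]
  have h3 : HasDerivAt (fun x : ℝ => x^2) (2*x) x := by simpa using hasDerivAt_pow 2 x
  have := (h1.add h2).add h3
  refine this.congr_deriv ?_
  symm
  have hpy := Real.sin_sq_add_cos_sq x
  norm_num
  linear_combination (2*x) * hpy

lemma Qf_cont : Continuous Qf := by unfold Qf; continuity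

lemma Qf_pi2 : Qf (Real.pi/2) = Real.pi^2/4 := by
  simp [Qf, Real.cos_pi_div_two, Real.sin_pi_div_two]
  ring

lemma Qf_ge : ∀ θ ∈ Icc 0 (Real.pi/2), Real.pi^2/4 ≤ Qf θ := by
  have hπ2 : Real.pi^2 < 10 := by nlinarith [Real.pi_lt_d2, Real.pi_pos]
  intro θ hθ
  rcases eq_or_lt_of_le hθ.1 with h0 | h0
  · simp [Qf, ← h0]; nlinarith
  rcases eq_or_lt_of_le hθ.2 with h1 | h1
  · rw [h1, Qf_pi2]
  have hθmem : θ ∈ Ioo 0 (Real.pi/2) := ⟨h0, h1⟩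
  by_cases hcase : Real.tan θ / θ ≤ 4/3
  · -- Qf monotone on [0, θ]
    have hmono : MonotoneOn Qf (Icc 0 θ) := by
      apply monotoneOn_of_deriv_nonneg (convex_Icc 0 θ) Qf_cont.continuousOn
        (fun x hx => (Qf_deriv x).differentiableAt.differentiableWithinAt)
      intro x hx
      rw [interior_Icc] at hx
      have hxm : x ∈ Ioo 0 (Real.pi/2) := ⟨hx.1, lt_trans hx.2 h1⟩
      have hcx : 0 < Real.cos x := Real.cos_pos_of_mem_Ioo ⟨by linarith [Real.pi_pos, hxm.1], hxm.2⟩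
      have htan : Real.tan x / x ≤ 4/3 :=
        le_trans (tanDivMono hxm hθmem hx.2.le) hcase
      have hsin : Real.sin x ≤ 4/3 * x * Real.cos x := by
        rw [div_le_iff₀ hxm.1] at htan
        rw [Real.tan_eq_sin_div_cos, div_le_iff₀ hcx] at htan
        nlinarith
      rw [(Qf_deriv x).deriv]
      nlinarith
    have := hmono (left_mem_Icc.2 h0.le) (right_mem_Icc.2 h0.le) h0.le
    have hQ0 : Qf 0 = 5/2 := by simp [Qf]
    rw [hQ0] at this
    linarith
  · push_neg at hcase
    have hanti : AntitoneOn Qf (Icc θ (Real.pi/2)) := by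
      apply antitoneOn_of_deriv_nonpos (convex_Icc θ (Real.pi/2)) Qf_cont.continuousOn
        (fun x hx => (Qf_deriv x).differentiableAt.differentiableWithinAt)
      intro x hx
      rw [interior_Icc] at hx
      have hxm : x ∈ Ioo 0 (Real.pi/2) := ⟨lt_trans h0 hx.1, hx.2⟩
      have hcx : 0 < Real.cos x := Real.cos_pos_of_mem_Ioo ⟨by linarith [Real.pi_pos, hxm.1], hxm.2⟩
      have htan : 4/3 ≤ Real.tan x / x :=
        le_trans hcase.le (tanDivMono hθmem hxm hx.1.le)
      have hsin : 4/3 * x * Real.cos x ≤ Real.sin x := by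
        rw [le_div_iff₀ hxm.1] at htan
        rw [Real.tan_eq_sin_div_cos, le_div_iff₀ hcx] at htan
        nlinarith
      rw [(Qf_deriv x).deriv]
      nlinarith
    have := hanti (left_mem_Icc.2 h1.le) (right_mem_Icc.2 h1.le) h1.le
    rw [Qf_pi2] at this
    linarith

noncomputable def Kf (x : ℝ) : ℝ := Real.cos x^2 + 2*x*Real.sin x*Real.cos x + x^2

lemma Kf_deriv (x : ℝ) : HasDerivAt Kf (4*x*Real.cos x^2) x := by
  have h1 : HasDerivAt (fun x => Real.cos x^2) (2*Real.cos x^(2-1)*(-Real.sin x)) x :=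
    (Real.hasDerivAt_cos x).pow 2
  have h2 : HasDerivAt (fun x => 2*x*Real.sin x*Real.cos x)
      (((2*Real.sin x + 2*x*Real.cos x)*Real.cos x) + 2*x*Real.sin x*(-Real.sin x)) x := by
    refine ((((hasDerivAt_id x).const_mul 2).mul (Real.hasDerivAt_sin x)).mul (Real.hasDerivAt_cos x)).congr_deriv ?_
    simp only [id, mul_one, Pi.mul_apply]
  have h3 : HasDerivAt (fun x : ℝ => x^2) (2*x) x := by simpa using hasDerivAt_pow 2 x
  have := (h1.add h2).add h3
  refine this.congr_deriv ?_
  symm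
  have hpy := Real.sin_sq_add_cos_sq x
  norm_num
  linear_combination (2*x) * hpy

lemma Kf_le : ∀ θ ∈ Icc 0 (Real.pi/2), Kf θ ≤ Real.pi^2/4 := by
  intro θ hθ
  have hmono : MonotoneOn Kf (Icc 0 (Real.pi/2)) := by
    apply monotoneOn_of_deriv_nonneg (convex_Icc _ _)
      (show Continuous Kf by unfold Kf; continuity).continuousOn
      (fun x hx => (Kf_deriv x).differentiableAt.differentiableWithinAt)
    intro x hx
    rw [interior_Icc] at hx
    rw [(Kf_deriv x).deriv]
    have := hx.1
    positivity
  have h2 : Kf (Real.pi/2) = Real.pi^2/4 := by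
    simp [Kf, Real.cos_pi_div_two, Real.sin_pi_div_two]; ring
  have := hmono hθ (right_mem_Icc.2 (by positivity)) hθ.2
  rw [h2] at this; exact this

lemma xi_bounds : ∀ θ ∈ Icc 0 (Real.pi/2), -(3/2) ≤ xi θ ∧ xi θ ≤ 0 := by
  intro θ hθ
  rcases eq_or_lt_of_le hθ.2 with h1 | h1
  · rw [h1]
    unfold xi
    simp [Real.cos_pi_div_two]
    norm_num
  · have hc : 0 < Real.cos θ := Real.cos_pos_of_mem_Ioo ⟨by linarith [Real.pi_pos, hθ.1], h1⟩
    have hc2 : 0 < Real.cos θ^2 := by positivity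
    have hK := Kf_le θ hθ
    have hQ := Qf_ge θ hθ
    unfold Kf at hK
    unfold Qf at hQ
    constructor
    · rw [xi, le_div_iff₀ hc2]
      nlinarith
    · rw [xi, div_nonpos_iff]
      right
      exact ⟨by nlinarith, by positivity⟩

lemma xi_measurable : Measurable xi := by
  have h : Continuous fun θ => Real.cos θ^2 + 2*θ*Real.sin θ*Real.cos θ + θ^2 - Real.pi^2/4 := by
    continuity
  exact h.measurable.div ((Real.continuous_cos.pow 2).measurable)

lemma xi_integrableOn : MeasureTheory.IntegrableOn xi (Icc 0 (Real.pi/2)) := by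
  apply MeasureTheory.Integrable.mono' (MeasureTheory.integrable_const (3/2 : ℝ))
    xi_measurable.aestronglyMeasurable
  rw [MeasureTheory.ae_restrict_iff' measurableSet_Icc]
  filter_upwards with θ hθ
  have h := xi_bounds θ hθ
  rw [Real.norm_eq_abs, abs_le]
  constructor <;> linarith [h.1, h.2]

lemma xi_intervalIntegrable : IntervalIntegrable xi MeasureTheory.volume 0 (Real.pi/2) := by
  apply MeasureTheory.IntegrableOn.intervalIntegrable
  rw [uIcc_of_le (by positivity)]
  exact xi_integrableOn

noncomputable def F0 (b : ℝ) : ℝ := b + (b^2 - Real.pi^2/4) * Real.tan b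

lemma F0_eq_integral : ∀ b ∈ Ico (0:ℝ) (Real.pi/2), (∫ θ in (0:ℝ)..b, xi θ) = F0 b := by
  intro b hb
  have hderiv : ∀ x ∈ uIcc (0:ℝ) b, HasDerivAt F0 (xi x) x := by
    intro x hx
    rw [uIcc_of_le hb.1] at hx
    have hc : 0 < Real.cos x := Real.cos_pos_of_mem_Ioo
      ⟨by linarith [Real.pi_pos, hx.1], lt_of_le_of_lt hx.2 hb.2⟩
    have h1 : HasDerivAt (fun y : ℝ => y^2 - Real.pi^2/4) (2*x) x := by
      simpa using (hasDerivAt_pow 2 x).sub_const (Real.pi^2/4)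
    have h3 : HasDerivAt F0 (1 + (2*x*Real.tan x + (x^2 - Real.pi^2/4)*(1/Real.cos x^2))) x := by
      unfold F0
      exact (hasDerivAt_id x).add (h1.mul (Real.hasDerivAt_tan hc.ne'))
    convert h3 using 1
    unfold xi
    rw [Real.tan_eq_sin_div_cos]
    field_simp
    ring
  have hint : IntervalIntegrable xi MeasureTheory.volume 0 b := by
    apply xi_intervalIntegrable.mono_set
    rw [uIcc_of_le hb.1, uIcc_of_le (by positivity : (0:ℝ) ≤ Real.pi/2)]
    exact Icc_subset_Icc le_rfl hb.2.le
  have := intervalIntegral.integral_eq_sub_of_hasDerivAt hderiv hint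
  rw [this]
  have : F0 0 = 0 := by unfold F0; simp [Real.tan_zero]
  rw [this, sub_zero]

lemma xi_integral : (∫ θ in (0:ℝ)..(Real.pi/2), xi θ) = Real.pi/2 - Real.pi := by
  have hpi : (0:ℝ) < Real.pi/2 := by positivity
  have hslope : Tendsto (fun b => (b - Real.pi/2)/Real.cos b) (𝓝[<] (Real.pi/2)) (𝓝 (-1)) := by
    have h := Real.hasDerivAt_cos (Real.pi/2)
    rw [hasDerivAt_iff_tendsto_slope] at h
    rw [Real.sin_pi_div_two] at h
    have h' : Tendsto (fun b => Real.cos b / (b - Real.pi/2)) (𝓝[≠] (Real.pi/2)) (𝓝 (-1)) := by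
      convert h using 1
      funext b
      rw [slope_def_field, Real.cos_pi_div_two]
      simp [div_eq_div_iff]
    have h'' := (h'.mono_left (nhdsWithin_mono _ (fun x (hx : x ∈ Iio (Real.pi/2)) => ne_of_lt hx))).inv₀ (by norm_num)
    simpa [inv_div, inv_neg, inv_one] using h''
  have hb : Tendsto (fun b : ℝ => b) (𝓝[<] (Real.pi/2)) (𝓝 (Real.pi/2)) :=
    tendsto_id.mono_left nhdsWithin_le_nhds
  have hsin : Tendsto (fun b => Real.sin b) (𝓝[<] (Real.pi/2)) (𝓝 (Real.sin (Real.pi/2))) :=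
    (Real.continuous_sin.tendsto _).comp hb
  have hF0 : Tendsto F0 (𝓝[<] (Real.pi/2)) (𝓝 (Real.pi/2 - Real.pi)) := by
    have h2 : Tendsto (fun b => b + ((b - Real.pi/2)/Real.cos b) * ((b + Real.pi/2) * Real.sin b))
        (𝓝[<] (Real.pi/2))
        (𝓝 (Real.pi/2 + (-1) * ((Real.pi/2 + Real.pi/2) * Real.sin (Real.pi/2)))) :=
      hb.add (hslope.mul ((hb.add tendsto_const_nhds).mul hsin))
    have h3 : Real.pi/2 + (-1) * ((Real.pi/2 + Real.pi/2) * Real.sin (Real.pi/2))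
        = Real.pi/2 - Real.pi := by rw [Real.sin_pi_div_two]; ring
    rw [h3] at h2
    convert h2 using 2 with b
    unfold F0
    rw [Real.tan_eq_sin_div_cos]
    ring
  have hI : Tendsto (fun u => ∫ θ in (0:ℝ)..u, xi θ) (𝓝[<] (Real.pi/2))
      (𝓝 (∫ θ in (0:ℝ)..(Real.pi/2), xi θ)) := by
    have hcont : ContinuousOn (fun u => ∫ θ in (0:ℝ)..u, xi θ) (Icc 0 (Real.pi/2)) := by
      have := intervalIntegral.continuousOn_primitive_interval
        (a := (0:ℝ)) (b := Real.pi/2) (f := xi) (μ := MeasureTheory.volume) ?_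
      · rwa [uIcc_of_le hpi.le] at this
      · rw [uIcc_of_le hpi.le]; exact xi_integrableOn
    have hcw := hcont _ (right_mem_Icc.2 hpi.le)
    rw [ContinuousWithinAt] at hcw
    apply hcw.mono_left
    rw [← nhdsWithin_Ico_eq_nhdsLT hpi]
    exact nhdsWithin_mono _ Ico_subset_Icc_self
  have hI2 : Tendsto (fun u => ∫ θ in (0:ℝ)..u, xi θ) (𝓝[<] (Real.pi/2))
      (𝓝 (Real.pi/2 - Real.pi)) := by
    apply hF0.congr'
    filter_upwards [Ioo_mem_nhdsLT_of_mem (b := Real.pi/2) ⟨hpi, le_rfl⟩] with b hb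
    exact (F0_eq_integral b ⟨hb.1.le, hb.2⟩).symm
  exact tendsto_nhds_unique hI hI2

lemma tangent_ineq {a x : ℝ} (ha : 0 < a) (hx : 0 < x) :
    1/Real.sqrt a - (x - a)/(2*Real.sqrt a^3) ≤ 1/Real.sqrt x := by
  set u := Real.sqrt x with hu
  set b := Real.sqrt a with hb
  have hsa : 0 < b := Real.sqrt_pos.2 ha
  have hsx : 0 < u := Real.sqrt_pos.2 hx
  have ha2 : b^2 = a := Real.sq_sqrt ha.le
  have hx2 : u^2 = x := Real.sq_sqrt hx.le
  rw [← sub_nonneg]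
  have hdiff : 1/u - (1/b - (x - a)/(2*b^3)) = ((u-b)^2*(u+2*b))/(2*b^3*u) := by
    rw [← hx2, ← ha2]
    field_simp
    ring
  rw [hdiff]
  positivity

theorem z_inv_sqrt_integral_half (δ : ℝ) (hδ0 : 0 < δ) (hδ1 : δ ≤ 1 / 2) :
    ∫ θ in (0 : ℝ)..(Real.pi / 2), (1 + δ * xi θ) ^ (-(1 : ℝ) / 2) ≥
      Real.pi / 2 * (1 - δ) ^ (-(1 : ℝ) / 2) := by
  have hpi : (0:ℝ) ≤ Real.pi/2 := by positivity
  have ha : 0 < 1 - δ := by linarith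
  set b := Real.sqrt (1-δ) with hbdef
  have hb : 0 < b := Real.sqrt_pos.2 ha
  set g : ℝ → ℝ := fun θ => 1/b - (δ*xi θ + δ)/(2*b^3) with hgdef
  have hxiconst : IntervalIntegrable (fun θ => δ * xi θ + δ) MeasureTheory.volume 0 (Real.pi/2) :=
    (xi_intervalIntegrable.const_mul δ).add intervalIntegrable_const
  have hg_int : IntervalIntegrable g MeasureTheory.volume 0 (Real.pi/2) :=
    intervalIntegrable_const.sub (hxiconst.div_const _)
  have hfm : Measurable fun θ => (1 + δ * xi θ) ^ (-(1:ℝ)/2) := by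
    have h1 : Measurable fun θ => 1 + δ * xi θ := (xi_measurable.const_mul δ).const_add 1
    measurability
  have hbase : ∀ θ ∈ Icc (0:ℝ) (Real.pi/2), 1/4 ≤ 1 + δ * xi θ ∧ 1 + δ * xi θ ≤ 2 := by
    intro θ hθ
    obtain ⟨hl, hu⟩ := xi_bounds θ hθ
    constructor <;> nlinarith
  have hf_int : IntervalIntegrable (fun θ => (1 + δ * xi θ) ^ (-(1:ℝ)/2))
      MeasureTheory.volume 0 (Real.pi/2) := by
    apply MeasureTheory.IntegrableOn.intervalIntegrable
    rw [uIcc_of_le hpi]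
    apply MeasureTheory.Integrable.mono' (MeasureTheory.integrable_const (2 : ℝ))
      hfm.aestronglyMeasurable
    rw [MeasureTheory.ae_restrict_iff' measurableSet_Icc]
    filter_upwards with θ hθ
    obtain ⟨h14, _⟩ := hbase θ hθ
    rw [Real.norm_eq_abs, abs_of_nonneg (Real.rpow_nonneg (by linarith) _)]
    rw [show (-(1:ℝ)/2) = -(1/2) by ring, Real.rpow_neg (by linarith), ← Real.sqrt_eq_rpow]
    rw [inv_le_comm₀ (Real.sqrt_pos.2 (by linarith)) (by norm_num)]
    have h := Real.sqrt_le_sqrt (show (1:ℝ)/4 ≤ 1 + δ * xi θ by linarith)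
    rw [show (1:ℝ)/4 = (1/2:ℝ)^2 by norm_num, Real.sqrt_sq (by norm_num)] at h
    linarith
  have hpoint : ∀ θ ∈ Icc (0:ℝ) (Real.pi/2), g θ ≤ (1 + δ * xi θ) ^ (-(1:ℝ)/2) := by
    intro θ hθ
    obtain ⟨h14, _⟩ := hbase θ hθ
    have hxpos : 0 < 1 + δ * xi θ := by linarith
    rw [show (-(1:ℝ)/2) = -(1/2) by ring, Real.rpow_neg hxpos.le, ← Real.sqrt_eq_rpow,
      ← one_div]
    have h := tangent_ineq ha hxpos
    rw [hgdef]
    simp only []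
    rw [← hbdef] at h
    have heq : (1 + δ * xi θ) - (1 - δ) = δ * xi θ + δ := by ring
    rw [heq] at h
    exact h
  have hmono := intervalIntegral.integral_mono_on hpi hg_int hf_int hpoint
  have hgval : (∫ θ in (0:ℝ)..(Real.pi/2), g θ) = Real.pi/2 * (1/b) := by
    rw [hgdef]
    simp only []
    rw [intervalIntegral.integral_sub intervalIntegrable_const (hxiconst.div_const _)]
    rw [intervalIntegral.integral_const]
    rw [intervalIntegral.integral_div]
    rw [intervalIntegral.integral_add (xi_intervalIntegrable.const_mul δ) intervalIntegrable_const]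
    rw [intervalIntegral.integral_const_mul, xi_integral, intervalIntegral.integral_const]
    simp only [smul_eq_mul, sub_zero]
    rw [show δ * (Real.pi/2 - Real.pi) + (Real.pi/2) * δ = 0 by ring]
    rw [zero_div, sub_zero]
  have hrw : (1-δ) ^ (-(1:ℝ)/2) = 1/b := by
    rw [show (-(1:ℝ)/2) = -(1/2) by ring, Real.rpow_neg ha.le, ← Real.sqrt_eq_rpow, one_div,
      hbdef]
  rw [ge_iff_le, hrw]
  calc Real.pi/2 * (1/b) = ∫ θ in (0:ℝ)..(Real.pi/2), g θ := hgval.symm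
    _ ≤ _ := hmono
end
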